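/- Let α^{c,c}, α^{c,a}, α^{a,c}, α^{a,a} > 0 and β^{c,c}, β^{c,a}, β^{a,c}, β^{a,a} > 0, let K ≥ 1 be the agent's concurrency with concurrency factor k = f(K) > 0, for each conversation m = 1,…,K let A_{0,m}^c ≤ ⋯ ≤ A_{n_m^c,m}^c ≤ t and A_{1,m}^a ≤ ⋯ ≤ A_{n_m^a,m}^a ≤ t be its customer and agent message times with positive weights g_{i,m}^c and g_{j,m}^a, and let δ > 0. Then Σ_{m=1}^{K} ∫_t^{t+δ} (λ_{s,m}^c + λ_{s,m}^a) ds = Σ_{m=1}^{K} [ Σ_{i=0}^{n_m^c} (α^{c,c}/β^{c,c}) g_{i,m}^c (e^{−β^{c,c}(t−A_{i,m}^c)} − e^{−β^{c,c}(t+δ−A_{i,m}^c)}) + Σ_{j=1}^{n_m^a} (α^{c,a}/β^{c,a}) g_{j,m}^a (e^{−β^{c,a}(t−A_{j,m}^a)} − e^{−β^{c,a}(t+δ−A_{j,m}^a)}) + Σ_{i=0}^{n_m^c} (α^{a,c}/β^{a,c}) g_{i,m}^c (e^{−β^{a,c} k (t−A_{i,m}^c)} − e^{−β^{a,c} k (t+δ−A_{i,m}^c)})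 + Σ_{j=1}^{n_m^a} (α^{a,a}/β^{a,a}) g_{j,m}^a (e^{−β^{a,a} k (t−A_{j,m}^a)} − e^{−β^{a,a} k (t+δ−A_{j,m}^a)}) ]. Consequently, the probability that none of the agent's K conversations is active on [t, t+δ) in the SyBHP conversation model equals exp of minus this sum (Proposition 3, SyBHP case). -/

import Mathlib

open MeasureTheory Filter


lemma sybhp_key (a b g A t u : ℝ) (hb : b ≠ 0) :
    ∫ s in t..u, a * g * Real.exp (-b * (s - A))
      = a / b * g * (Real.exp (-b * (t - A)) - Real.exp (-b * (u - A))) := by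
  have h : ∀ s : ℝ, HasDerivAt (fun s => -(a / b * g) * Real.exp (-b * (s - A)))
      (a * g * Real.exp (-b * (s - A))) s := by
    intro s
    have h1 : HasDerivAt (fun s : ℝ => -b * (s - A)) (-b) s := by
      simpa using (((hasDerivAt_id s).sub_const A).const_mul (-b))
    have h2 := (Real.hasDerivAt_exp (-b * (s - A))).comp s h1
    have h3 := h2.const_mul (-(a / b * g))
    convert h3 using 1
    · rfl
    · rfl
    · rfl
    field_simp
  rw [intervalIntegral.integral_eq_sub_of_hasDerivAt (fun s _ => h s)
    (by apply Continuous.intervalIntegrable; fun_prop)]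
  ring

theorem sybhp_agent_no_messages_interval
    (acc aca aac aaa bcc bca bac baa : ℝ)
    (hacc : 0 < acc) (haca : 0 < aca) (haac : 0 < aac) (haaa : 0 < aaa)
    (hbcc : 0 < bcc) (hbca : 0 < bca) (hbac : 0 < bac) (hbaa : 0 < baa)
    (k : ℝ) (hk : 0 < k)
    (K : ℕ) (hK : 1 ≤ K)
    (nc na : ℕ → ℕ) (Ac Aa : ℕ → ℕ → ℝ) (t : ℝ)
    (hAcmono : ∀ m ∈ Finset.Icc 1 K, ∀ i < nc m, Ac m i ≤ Ac m (i + 1))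
    (hAct : ∀ m ∈ Finset.Icc 1 K, Ac m (nc m) ≤ t)
    (hAamono : ∀ m ∈ Finset.Icc 1 K, ∀ j, 1 ≤ j → j < na m → Aa m j ≤ Aa m (j + 1))
    (hAat : ∀ m ∈ Finset.Icc 1 K, 1 ≤ na m → Aa m (na m) ≤ t)
    (gc ga : ℕ → ℕ → ℝ)
    (hgc : ∀ m ∈ Finset.Icc 1 K, ∀ i ≤ nc m, 0 < gc m i)
    (hga : ∀ m ∈ Finset.Icc 1 K, ∀ j, 1 ≤ j → j ≤ na m → 0 < ga m j)
    (δ : ℝ) (hδ : 0 < δ) :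
    (∑ m ∈ Finset.Icc 1 K, ∫ s in t..(t + δ),
          ((∑ i ∈ Finset.range (nc m + 1), acc * gc m i * Real.exp (-bcc * (s - Ac m i)))
            + (∑ j ∈ Finset.Icc 1 (na m), aca * ga m j * Real.exp (-bca * (s - Aa m j))))
          + ((∑ i ∈ Finset.range (nc m + 1), aac * k * gc m i * Real.exp (-bac * k * (s - Ac m i)))
            + (∑ j ∈ Finset.Icc 1 (na m), aaa * k * ga m j * Real.exp (-baa * k * (s - Aa m j)))))
      = (∑ m ∈ Finset.Icc 1 K,
        ((∑ i ∈ Finset.range (nc m + 1), acc / bcc * gc m i * (Real.exp (-bcc * (t - Ac m i)) - Real.exp (-bcc * (t + δ - Ac m i))))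
          + (∑ j ∈ Finset.Icc 1 (na m), aca / bca * ga m j * (Real.exp (-bca * (t - Aa m j)) - Real.exp (-bca * (t + δ - Aa m j))))
          + (∑ i ∈ Finset.range (nc m + 1), aac / bac * gc m i * (Real.exp (-bac * k * (t - Ac m i)) - Real.exp (-bac * k * (t + δ - Ac m i))))
          + (∑ j ∈ Finset.Icc 1 (na m), aaa / baa * ga m j * (Real.exp (-baa * k * (t - Aa m j)) - Real.exp (-baa * k * (t + δ - Aa m j))))))
    ∧ Real.exp (-(∑ m ∈ Finset.Icc 1 K, ∫ s in t..(t + δ),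
          ((∑ i ∈ Finset.range (nc m + 1), acc * gc m i * Real.exp (-bcc * (s - Ac m i)))
            + (∑ j ∈ Finset.Icc 1 (na m), aca * ga m j * Real.exp (-bca * (s - Aa m j))))
          + ((∑ i ∈ Finset.range (nc m + 1), aac * k * gc m i * Real.exp (-bac * k * (s - Ac m i)))
            + (∑ j ∈ Finset.Icc 1 (na m), aaa * k * ga m j * Real.exp (-baa * k * (s - Aa m j))))))
      = Real.exp (-(∑ m ∈ Finset.Icc 1 K,
        ((∑ i ∈ Finset.range (nc m + 1), acc / bcc * gc m i * (Real.exp (-bcc * (t - Ac m i)) - Real.exp (-bcc * (t + δ - Ac m i))))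
          + (∑ j ∈ Finset.Icc 1 (na m), aca / bca * ga m j * (Real.exp (-bca * (t - Aa m j)) - Real.exp (-bca * (t + δ - Aa m j))))
          + (∑ i ∈ Finset.range (nc m + 1), aac / bac * gc m i * (Real.exp (-bac * k * (t - Ac m i)) - Real.exp (-bac * k * (t + δ - Ac m i))))
          + (∑ j ∈ Finset.Icc 1 (na m), aaa / baa * ga m j * (Real.exp (-baa * k * (t - Aa m j)) - Real.exp (-baa * k * (t + δ - Aa m j))))))) := by
  have main : (∑ m ∈ Finset.Icc 1 K, ∫ s in t..(t + δ),
          ((∑ i ∈ Finset.range (nc m + 1), acc * gc m i * Real.exp (-bcc * (s - Ac m i)))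
            + (∑ j ∈ Finset.Icc 1 (na m), aca * ga m j * Real.exp (-bca * (s - Aa m j))))
          + ((∑ i ∈ Finset.range (nc m + 1), aac * k * gc m i * Real.exp (-bac * k * (s - Ac m i)))
            + (∑ j ∈ Finset.Icc 1 (na m), aaa * k * ga m j * Real.exp (-baa * k * (s - Aa m j)))))
      = (∑ m ∈ Finset.Icc 1 K,
        ((∑ i ∈ Finset.range (nc m + 1), acc / bcc * gc m i * (Real.exp (-bcc * (t - Ac m i)) - Real.exp (-bcc * (t + δ - Ac m i))))
          + (∑ j ∈ Finset.Icc 1 (na m), aca / bca * ga m j * (Real.exp (-bca * (t - Aa m j)) - Real.exp (-bca * (t + δ - Aa m j))))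
          + (∑ i ∈ Finset.range (nc m + 1), aac / bac * gc m i * (Real.exp (-bac * k * (t - Ac m i)) - Real.exp (-bac * k * (t + δ - Ac m i))))
          + (∑ j ∈ Finset.Icc 1 (na m), aaa / baa * ga m j * (Real.exp (-baa * k * (t - Aa m j)) - Real.exp (-baa * k * (t + δ - Aa m j)))))) := by
    refine Finset.sum_congr rfl (fun m _ => ?_)
    have i1 : IntervalIntegrable (fun s => ∑ i ∈ Finset.range (nc m + 1), acc * gc m i * Real.exp (-bcc * (s - Ac m i))) volume t (t + δ) := by
      apply Continuous.intervalIntegrable; fun_prop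
    have i2 : IntervalIntegrable (fun s => ∑ j ∈ Finset.Icc 1 (na m), aca * ga m j * Real.exp (-bca * (s - Aa m j))) volume t (t + δ) := by
      apply Continuous.intervalIntegrable; fun_prop
    have i3 : IntervalIntegrable (fun s => ∑ i ∈ Finset.range (nc m + 1), aac * k * gc m i * Real.exp (-bac * k * (s - Ac m i))) volume t (t + δ) := by
      apply Continuous.intervalIntegrable; fun_prop
    have i4 : IntervalIntegrable (fun s => ∑ j ∈ Finset.Icc 1 (na m), aaa * k * ga m j * Real.exp (-baa * k * (s - Aa m j))) volume t (t + δ) := by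
      apply Continuous.intervalIntegrable; fun_prop
    rw [intervalIntegral.integral_add (i1.add i2) (i3.add i4),
        intervalIntegral.integral_add i1 i2, intervalIntegral.integral_add i3 i4,
        intervalIntegral.integral_finset_sum (fun i _ => by apply Continuous.intervalIntegrable; fun_prop),
        intervalIntegral.integral_finset_sum (fun j _ => by apply Continuous.intervalIntegrable; fun_prop),
        intervalIntegral.integral_finset_sum (fun i _ => by apply Continuous.intervalIntegrable; fun_prop),
        intervalIntegral.integral_finset_sum (fun j _ => by apply Continuous.intervalIntegrable; fun_prop)]
    have e1 : ∀ i ∈ Finset.range (nc m + 1),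
        (∫ s in t..(t + δ), acc * gc m i * Real.exp (-bcc * (s - Ac m i)))
          = acc / bcc * gc m i * (Real.exp (-bcc * (t - Ac m i)) - Real.exp (-bcc * (t + δ - Ac m i))) :=
      fun i _ => sybhp_key acc bcc (gc m i) (Ac m i) t (t + δ) hbcc.ne'
    have e2 : ∀ j ∈ Finset.Icc 1 (na m),
        (∫ s in t..(t + δ), aca * ga m j * Real.exp (-bca * (s - Aa m j)))
          = aca / bca * ga m j * (Real.exp (-bca * (t - Aa m j)) - Real.exp (-bca * (t + δ - Aa m j))) :=
      fun j _ => sybhp_key aca bca (ga m j) (Aa m j) t (t + δ) hbca.ne'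
    have e3 : ∀ i ∈ Finset.range (nc m + 1),
        (∫ s in t..(t + δ), aac * k * gc m i * Real.exp (-bac * k * (s - Ac m i)))
          = aac / bac * gc m i * (Real.exp (-bac * k * (t - Ac m i)) - Real.exp (-bac * k * (t + δ - Ac m i))) := by
      intro i _
      have h := sybhp_key (aac * k) (bac * k) (gc m i) (Ac m i) t (t + δ) (by positivity)
      rw [mul_div_mul_right _ _ hk.ne'] at h
      simp only [neg_mul, mul_assoc] at h ⊢
      exact h
    have e4 : ∀ j ∈ Finset.Icc 1 (na m),
        (∫ s in t..(t + δ), aaa * k * ga m j * Real.exp (-baa * k * (s - Aa m j)))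
          = aaa / baa * ga m j * (Real.exp (-baa * k * (t - Aa m j)) - Real.exp (-baa * k * (t + δ - Aa m j))) := by
      intro j _
      have h := sybhp_key (aaa * k) (baa * k) (ga m j) (Aa m j) t (t + δ) (by positivity)
      rw [mul_div_mul_right _ _ hk.ne'] at h
      simp only [neg_mul, mul_assoc] at h ⊢
      exact h
    rw [Finset.sum_congr rfl e1, Finset.sum_congr rfl e2, Finset.sum_congr rfl e3, Finset.sum_congr rfl e4]
    ring
  exact ⟨main, by rw [main]⟩
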